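/- Fix n ≥ 1 and an open set U ⊆ ℂⁿ × ℂⁿ. Let p be a formal WKB symbol on U with p_j = 0 for all j > 0, and let s : U → ℂ be a holomorphic, nowhere vanishing function with s² = p_0. Then there exists a unique formal WKB symbol q on U with q_j = 0 for all j > 0, q_0 = s, and q★q = p. -/

import Mathlib

open scoped BigOperators

/-- The phase space `ℂⁿ × ℂⁿ` with coordinates `(x, u)`. -/
abbrev Phase (n : ℕ) := (Fin n → ℂ) × (Fin n → ℂ)

/-- The partial derivative `∂_{x_i}` of a function on `ℂⁿ × ℂⁿ`. -/
noncomputable def pdx {n : ℕ} (i : Fin n) (h : Phase n → ℂ) : Phase n → ℂ :=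
  fun z => fderiv ℂ h z (Pi.single i 1, 0)

/-- The partial derivative `∂_{u_i}` of a function on `ℂⁿ × ℂⁿ`. -/
noncomputable def pdu {n : ℕ} (i : Fin n) (h : Phase n → ℂ) : Phase n → ℂ :=
  fun z => fderiv ℂ h z (0, Pi.single i 1)

/-- The iterated partial derivative `∂_x^α`. -/
noncomputable def dX {n : ℕ} (α : Fin n → ℕ) (h : Phase n → ℂ) : Phase n → ℂ :=
  ((List.finRange n).foldr (fun i F => (pdx i)^[α i] ∘ F) id) h

/-- The iterated partial derivative `∂_u^α`. -/
noncomputable def dU {n : ℕ} (α : Fin n → ℕ) (h : Phase n → ℂ) : Phase n → ℂ :=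
  ((List.finRange n).foldr (fun i F => (pdu i)^[α i] ∘ F) id) h

/-- The Leibniz product of two (coefficient families of) formal WKB symbols:
`(p★q)_j = Σ_{α ∈ ℕⁿ, k+l−|α|=j} (1/α!) · ∂_u^α p_k · ∂_x^α q_l`,
written as a `finsum` over the pairs `(α, k)` (with `l = j + |α| − k`);
for symbols vanishing in large degrees this sum has finite support. -/
noncomputable def leibniz {n : ℕ} (p q : ℤ → Phase n → ℂ) : ℤ → Phase n → ℂ :=
  fun j z => ∑ᶠ ak : (Fin n → ℕ) × ℤ,
    ((∏ i, (ak.1 i).factorial : ℕ) : ℂ)⁻¹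
      * dU ak.1 (p ak.2) z
      * dX ak.1 (q (j + ((∑ i, ak.1 i : ℕ) : ℤ) - ak.2)) z

/-- The unit symbol `1`. -/
def oneSymbol (n : ℕ) : ℤ → Phase n → ℂ := fun j _ => if j = 0 then 1 else 0


open scoped Real Topology
open Metric Set Complex MeasureTheory intervalIntegral

set_option maxHeartbeats 1000000
set_option synthInstance.maxHeartbeats 400000

/-- Derivative of the restriction of `h` to a complex line. -/
lemma hasDerivAt_slice {n : ℕ} {U : Set (Phase n)} (hU : IsOpen U) {h : Phase n → ℂ}
    (hd : DifferentiableOn ℂ h U) {z w : Phase n} (hz : z ∈ U) :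
    HasDerivAt (fun t : ℂ => h (z + t • w)) (fderiv ℂ h z w) 0 := by
  have haff : HasDerivAt (fun τ : ℂ => z + τ • w) w 0 := by
    simpa using ((hasDerivAt_id (0:ℂ)).smul_const w).const_add z
  have hh : HasFDerivAt h (fderiv ℂ h z) z :=
    (hd.differentiableAt (hU.mem_nhds hz)).hasFDerivAt
  have e : z + (0:ℂ) • w = z := by simp
  have hh' : HasFDerivAt h (fderiv ℂ h z) ((fun τ : ℂ => z + τ • w) 0) := by
    simpa [e] using hh
  exact hh'.comp_hasDerivAt 0 haff

lemma norm_fderiv_slice_le {n : ℕ} {U : Set (Phase n)} (hU : IsOpen U) {h : Phase n → ℂ}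
    (hd : DifferentiableOn ℂ h U) {z w : Phase n} {ρ M : ℝ} (hρ : 0 < ρ)
    (hsub : ∀ t : ℂ, ‖t‖ ≤ ρ → z + t • w ∈ U)
    (hM : ∀ t : ℂ, ‖t‖ ≤ ρ → ‖h (z + t • w)‖ ≤ M) :
    ‖fderiv ℂ h z w‖ ≤ M / ρ := by
  set g : ℂ → ℂ := fun t => h (z + t • w) with hg
  set V : Set ℂ := (fun t : ℂ => z + t • w) ⁻¹' U with hV
  have hVopen : IsOpen V := hU.preimage (continuous_const.add (continuous_id.smul continuous_const))
  have hgd : DifferentiableOn ℂ g V := by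
    intro t ht
    have h1 : DifferentiableAt ℂ h (z + t • w) := hd.differentiableAt (hU.mem_nhds ht)
    have h2 : DifferentiableAt ℂ (fun τ : ℂ => z + τ • w) t :=
      (differentiable_id.smul_const w).differentiableAt.const_add z
    exact (h1.comp t h2).differentiableWithinAt
  have hball : closedBall (0:ℂ) ρ ⊆ V := by
    intro t ht
    simp only [mem_closedBall, dist_zero_right] at ht
    exact hsub t ht
  have hz' : z ∈ U := by simpa using hsub 0 (by simp [hρ.le])
  have hderiv : deriv g 0 = fderiv ℂ h z w := (hasDerivAt_slice hU hd hz').deriv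
  rw [← hderiv, ← cderiv_eq_deriv hVopen hgd hρ hball]
  apply norm_cderiv_le hρ
  intro t ht
  simp only [mem_sphere_iff_norm, sub_zero] at ht
  exact hM t ht.le

/-- Local bound on the derivative of a holomorphic function, via Cauchy estimates. -/
lemma exists_fderiv_bound {n : ℕ} {U : Set (Phase n)} (hU : IsOpen U) {h : Phase n → ℂ}
    (hd : DifferentiableOn ℂ h U) {z0 : Phase n} (hz0 : z0 ∈ U) :
    ∃ δ : ℝ, 0 < δ ∧ ∃ C : ℝ, 0 ≤ C ∧ closedBall z0 δ ⊆ U ∧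
      ∀ z ∈ closedBall z0 δ, ‖fderiv ℂ h z‖ ≤ C := by
  obtain ⟨ε, εpos, hball⟩ := Metric.isOpen_iff.mp hU z0 hz0
  set δ := ε / 4 with hδ
  have δpos : 0 < δ := by positivity
  have h3δ : closedBall z0 (3 * δ) ⊆ U := by
    refine (closedBall_subset_ball ?_).trans hball
    rw [hδ]; linarith
  obtain ⟨M, hM⟩ := (isCompact_closedBall z0 (3 * δ)).exists_bound_of_continuousOn
    (hd.continuousOn.mono h3δ)
  have hM0 : 0 ≤ M := le_trans (norm_nonneg _) (hM z0 (by simp; positivity))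
  refine ⟨δ, δpos, M / δ, by positivity, (closedBall_subset_closedBall (by linarith)).trans h3δ,
    fun z hz => ?_⟩
  refine ContinuousLinearMap.opNorm_le_bound _ (by positivity) fun w => ?_
  rcases eq_or_ne w 0 with rfl | hw
  · simp
  · have hwpos : (0:ℝ) < ‖w‖ := norm_pos_iff.mpr hw
    set ρ := δ / ‖w‖ with hρdef
    have hρ : 0 < ρ := by positivity
    have key : ∀ t : ℂ, ‖t‖ ≤ ρ → z + t • w ∈ closedBall z0 (3 * δ) := by
      intro t ht
      rw [mem_closedBall, dist_eq_norm]
      have : z + t • w - z0 = (z - z0) + t • w := by abel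
      rw [this]
      have h1 : ‖z - z0‖ ≤ δ := by
        rw [← dist_eq_norm]; exact mem_closedBall.mp hz
      have h2 : ‖t • w‖ ≤ δ := by
        rw [norm_smul]
        calc ‖t‖ * ‖w‖ ≤ ρ * ‖w‖ := by gcongr
          _ = δ := by rw [hρdef]; field_simp
      calc ‖z - z0 + t • w‖ ≤ ‖z - z0‖ + ‖t • w‖ := norm_add_le _ _
        _ ≤ δ + δ := by gcongr
        _ ≤ 3 * δ := by linarith
    have := norm_fderiv_slice_le hU hd hρ (fun t ht => h3δ (key t ht))
      (fun t ht => hM _ (key t ht))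
    calc ‖fderiv ℂ h z w‖ ≤ M / ρ := this
      _ = M / δ * ‖w‖ := by rw [hρdef]; field_simp

/-- The directional derivative of a holomorphic function of several complex
variables is holomorphic. -/
lemma differentiableOn_fderiv_apply {n : ℕ} {U : Set (Phase n)} (hU : IsOpen U)
    {h : Phase n → ℂ} (hd : DifferentiableOn ℂ h U) (v : Phase n) :
    DifferentiableOn ℂ (fun z => fderiv ℂ h z v) U := by
  intro z0 hz0
  suffices H : DifferentiableAt ℂ (fun z => fderiv ℂ h z v) z0 from H.differentiableWithinAt
  obtain ⟨δ, δpos, C, hC0, hδU, hCb⟩ := exists_fderiv_bound hU hd hz0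
  set r : ℝ := δ / (2 * (‖v‖ + 1)) with hrdef
  have rpos : 0 < r := by positivity
  set ε : ℝ := δ / 2 with hεdef
  have εpos : 0 < ε := by positivity
  -- all relevant points are inside `closedBall z0 δ ⊆ U`
  have hmem : ∀ x ∈ ball z0 ε, ∀ t : ℂ, ‖t‖ ≤ r → x + t • v ∈ closedBall z0 δ := by
    intro x hx t ht
    rw [mem_closedBall, dist_eq_norm]
    have e : x + t • v - z0 = (x - z0) + t • v := by abel
    rw [e]
    have h1 : ‖x - z0‖ ≤ ε := by
      rw [← dist_eq_norm]; exact (mem_ball.mp hx).le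
    have h2 : ‖t • v‖ ≤ δ / 2 := by
      rw [norm_smul]
      calc ‖t‖ * ‖v‖ ≤ r * (‖v‖ + 1) := by
            apply mul_le_mul ht (by linarith) (norm_nonneg _) rpos.le
        _ = δ / 2 := by
            rw [hrdef]; field_simp
    calc ‖x - z0 + t • v‖ ≤ ‖x - z0‖ + ‖t • v‖ := norm_add_le _ _
      _ ≤ δ := by rw [hεdef] at h1; linarith
  have hmemU : ∀ x ∈ ball z0 ε, ∀ θ : ℝ, x + circleMap 0 r θ • v ∈ U := by
    intro x hx θ
    exact hδU (hmem x hx _ (by rw [norm_circleMap_zero]; simp [abs_of_pos rpos]))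
  have hγne : ∀ θ : ℝ, circleMap 0 r θ ≠ 0 := fun θ => circleMap_ne_center rpos.ne'
  -- the integrand and its derivative in the parameter
  set Φ : Phase n → ℝ → ℂ := fun x θ =>
    deriv (circleMap 0 r) θ • (((circleMap 0 r θ) ^ 2)⁻¹ • h (x + circleMap 0 r θ • v)) with hΦ
  set Φ' : Phase n → ℝ → (Phase n →L[ℂ] ℂ) := fun x θ =>
    deriv (circleMap 0 r) θ • (((circleMap 0 r θ) ^ 2)⁻¹ •
      fderiv ℂ h (x + circleMap 0 r θ • v)) with hΦ'
  have hγc : Continuous (circleMap 0 r) := continuous_circleMap 0 r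
  have hγdc : Continuous (fun θ => deriv (circleMap 0 r) θ) := by
    simp only [deriv_circleMap]; exact hγc.mul continuous_const
  have hinvc : Continuous (fun θ => ((circleMap 0 r θ) ^ 2)⁻¹) :=
    ((hγc.pow 2).inv₀ (fun θ => pow_ne_zero _ (hγne θ)))
  have hcontΦ : ∀ x ∈ ball z0 ε, Continuous (Φ x) := by
    intro x hx
    apply hγdc.smul
    apply hinvc.smul
    have hc2' : Continuous (fun θ : ℝ => x + circleMap 0 r θ • v) :=
      continuous_const.add (hγc.smul continuous_const)
    exact hd.continuousOn.comp_continuous hc2' (fun θ => hmemU x hx θ)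
  -- dominated differentiation under the integral sign
  have key := intervalIntegral.hasFDerivAt_integral_of_dominated_of_fderiv_le
    (F := Φ) (F' := Φ') (x₀ := z0) (a := 0) (b := 2 * π) (μ := volume)
    (bound := fun _ => r * ((r ^ 2)⁻¹ * C)) (ball_mem_nhds z0 εpos)
    -- measurability of Φ x
    (Filter.eventually_of_mem (ball_mem_nhds z0 εpos)
      (fun x hx => (hcontΦ x hx).aestronglyMeasurable))
    -- integrability at z0
    ((hcontΦ z0 (mem_ball_self εpos)).intervalIntegrable 0 (2 * π))
    -- measurability of Φ' z0
    (by
      apply Measurable.aestronglyMeasurable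
      apply (hγdc.measurable).smul
      apply (hinvc.measurable).smul
      exact (measurable_fderiv ℂ h).comp
        ((continuous_const.add (hγc.smul continuous_const)).measurable))
    -- bound
    (by
      filter_upwards with θ _ x hx
      rw [hΦ']
      have e1 : ‖deriv (circleMap 0 r) θ‖ = r := by
        simp [deriv_circleMap, norm_circleMap_zero, abs_of_pos rpos]
      have e2 : ‖((circleMap 0 r θ) ^ 2)⁻¹‖ = (r ^ 2)⁻¹ := by
        simp [map_inv₀, map_pow, norm_circleMap_zero, abs_of_pos rpos]
      rw [norm_smul (deriv (circleMap 0 r) θ)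
        (((circleMap 0 r θ) ^ 2)⁻¹ • fderiv ℂ h (x + circleMap 0 r θ • v)),
        norm_smul (((circleMap 0 r θ) ^ 2)⁻¹) (fderiv ℂ h (x + circleMap 0 r θ • v)),
        e1, e2]
      have := hCb _ (hmem x hx (circleMap 0 r θ)
        (by rw [norm_circleMap_zero]; simp [abs_of_pos rpos]))
      gcongr)
    (intervalIntegrable_const)
    -- differentiability in the parameter
    (by
      filter_upwards with θ _ x hx
      have hpt : x + circleMap 0 r θ • v ∈ U := hmemU x hx θ
      have hfd : HasFDerivAt h (fderiv ℂ h (x + circleMap 0 r θ • v))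
          (x + circleMap 0 r θ • v) :=
        (hd.differentiableAt (hU.mem_nhds hpt)).hasFDerivAt
      have haff : HasFDerivAt (fun y : Phase n => y + circleMap 0 r θ • v)
          (ContinuousLinearMap.id ℂ (Phase n)) x := (hasFDerivAt_id x).add_const _
      have hcomp := hfd.comp x haff
      rw [ContinuousLinearMap.comp_id] at hcomp
      exact (hcomp.const_smul (((circleMap 0 r θ) ^ 2)⁻¹)).const_smul
        (deriv (circleMap 0 r) θ))
  -- identify the integral with the directional derivative on the ball
  have hval : ∀ x ∈ ball z0 ε,
      fderiv ℂ h x v = (2 * π * I : ℂ)⁻¹ • ∫ θ in (0:ℝ)..2 * π, Φ x θ := by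
    intro x hx
    have hxU : x ∈ U := hδU (by simpa using hmem x hx 0 (by simp [rpos.le]))
    have h1 : ‖fderiv ℂ h x v - fderiv ℂ h x v‖ = 0 := by simp
    -- cderiv of the slice function
    set g : ℂ → ℂ := fun t => h (x + t • v) with hg
    set V : Set ℂ := (fun t : ℂ => x + t • v) ⁻¹' U with hVdef
    have hVopen : IsOpen V := hU.preimage (continuous_const.add (continuous_id.smul continuous_const))
    have hgd : DifferentiableOn ℂ g V := by
      intro t ht
      have h1 : DifferentiableAt ℂ h (x + t • v) := hd.differentiableAt (hU.mem_nhds ht)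
      have h2 : DifferentiableAt ℂ (fun τ : ℂ => x + τ • v) t :=
        (differentiable_id.smul_const v).differentiableAt.const_add x
      exact (h1.comp t h2).differentiableWithinAt
    have hball : closedBall (0:ℂ) r ⊆ V := by
      intro t ht
      simp only [mem_closedBall, dist_zero_right] at ht
      exact hδU (hmem x hx t ht)
    have e1 : deriv g 0 = fderiv ℂ h x v := (hasDerivAt_slice hU hd hxU).deriv
    rw [← e1, ← cderiv_eq_deriv hVopen hgd rpos hball]
    rw [cderiv, circleIntegral]
    congr 1
    apply intervalIntegral.integral_congr
    intro θ _
    simp only [sub_zero, hΦ, hg]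
  -- conclude
  have hG : DifferentiableAt ℂ
      (fun x => (2 * π * I : ℂ)⁻¹ • ∫ θ in (0:ℝ)..2 * π, Φ x θ) z0 :=
    (key.differentiableAt).fun_const_smul _
  exact hG.congr_of_eventuallyEq
    (Filter.eventuallyEq_of_mem (ball_mem_nhds z0 εpos) (fun x hx => hval x hx))

section DiffClosure

variable {n : ℕ} {U : Set (Phase n)}

lemma pdx_diffOn (hU : IsOpen U) {h : Phase n → ℂ} (hd : DifferentiableOn ℂ h U) (i : Fin n) :
    DifferentiableOn ℂ (pdx i h) U := differentiableOn_fderiv_apply hU hd _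

lemma pdu_diffOn (hU : IsOpen U) {h : Phase n → ℂ} (hd : DifferentiableOn ℂ h U) (i : Fin n) :
    DifferentiableOn ℂ (pdu i h) U := differentiableOn_fderiv_apply hU hd _

lemma iter_pdx_diffOn (hU : IsOpen U) {h : Phase n → ℂ} (hd : DifferentiableOn ℂ h U)
    (i : Fin n) (m : ℕ) : DifferentiableOn ℂ ((pdx i)^[m] h) U := by
  induction m generalizing h with
  | zero => simpa using hd
  | succ m ih =>
    rw [Function.iterate_succ_apply]
    exact ih (pdx_diffOn hU hd i)

lemma iter_pdu_diffOn (hU : IsOpen U) {h : Phase n → ℂ} (hd : DifferentiableOn ℂ h U)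
    (i : Fin n) (m : ℕ) : DifferentiableOn ℂ ((pdu i)^[m] h) U := by
  induction m generalizing h with
  | zero => simpa using hd
  | succ m ih =>
    rw [Function.iterate_succ_apply]
    exact ih (pdu_diffOn hU hd i)

lemma dX_diffOn (hU : IsOpen U) {h : Phase n → ℂ} (hd : DifferentiableOn ℂ h U)
    (α : Fin n → ℕ) : DifferentiableOn ℂ (dX α h) U := by
  rw [dX]
  generalize (List.finRange n) = L
  induction L generalizing h with
  | nil => simpa using hd
  | cons i L ih =>
    rw [List.foldr_cons]
    exact iter_pdx_diffOn hU (ih hd) i (α i)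

lemma dU_diffOn (hU : IsOpen U) {h : Phase n → ℂ} (hd : DifferentiableOn ℂ h U)
    (α : Fin n → ℕ) : DifferentiableOn ℂ (dU α h) U := by
  rw [dU]
  generalize (List.finRange n) = L
  induction L generalizing h with
  | nil => simpa using hd
  | cons i L ih =>
    rw [List.foldr_cons]
    exact iter_pdu_diffOn hU (ih hd) i (α i)

end DiffClosure

section ZeroAndCongr

variable {n : ℕ} {U : Set (Phase n)}

lemma pdx_zero (i : Fin n) : pdx i (0 : Phase n → ℂ) = 0 := by
  funext z
  show fderiv ℂ (fun _ : Phase n => (0:ℂ)) z _ = 0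
  rw [fderiv_fun_const]
  simp

lemma pdu_zero (i : Fin n) : pdu i (0 : Phase n → ℂ) = 0 := by
  funext z
  show fderiv ℂ (fun _ : Phase n => (0:ℂ)) z _ = 0
  rw [fderiv_fun_const]
  simp

lemma dX_zero (α : Fin n → ℕ) : dX α (0 : Phase n → ℂ) = 0 := by
  rw [dX]
  generalize (List.finRange n) = L
  induction L with
  | nil => rfl
  | cons i L ih =>
    rw [List.foldr_cons, Function.comp_apply, ih]
    exact Function.iterate_fixed (pdx_zero i) (α i)

lemma dU_zero (α : Fin n → ℕ) : dU α (0 : Phase n → ℂ) = 0 := by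
  rw [dU]
  generalize (List.finRange n) = L
  induction L with
  | nil => rfl
  | cons i L ih =>
    rw [List.foldr_cons, Function.comp_apply, ih]
    exact Function.iterate_fixed (pdu_zero i) (α i)

lemma dX_zero_exp (h : Phase n → ℂ) : dX (0 : Fin n → ℕ) h = h := by
  rw [dX]
  generalize (List.finRange n) = L
  induction L with
  | nil => rfl
  | cons i L ih => rw [List.foldr_cons]; simpa using ih

lemma dU_zero_exp (h : Phase n → ℂ) : dU (0 : Fin n → ℕ) h = h := by
  rw [dU]
  generalize (List.finRange n) = L
  induction L with
  | nil => rfl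
  | cons i L ih => rw [List.foldr_cons]; simpa using ih

lemma pdx_congr (hU : IsOpen U) {f g : Phase n → ℂ} (hfg : Set.EqOn f g U) (i : Fin n) :
    Set.EqOn (pdx i f) (pdx i g) U := by
  intro z hz
  show fderiv ℂ f z _ = fderiv ℂ g z _
  rw [Filter.EventuallyEq.fderiv_eq (hfg.eventuallyEq_of_mem (hU.mem_nhds hz))]

lemma pdu_congr (hU : IsOpen U) {f g : Phase n → ℂ} (hfg : Set.EqOn f g U) (i : Fin n) :
    Set.EqOn (pdu i f) (pdu i g) U := by
  intro z hz
  show fderiv ℂ f z _ = fderiv ℂ g z _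
  rw [Filter.EventuallyEq.fderiv_eq (hfg.eventuallyEq_of_mem (hU.mem_nhds hz))]

lemma dX_congr (hU : IsOpen U) {f g : Phase n → ℂ} (hfg : Set.EqOn f g U) (α : Fin n → ℕ) :
    Set.EqOn (dX α f) (dX α g) U := by
  rw [dX, dX]
  generalize (List.finRange n) = L
  induction L generalizing f g with
  | nil => simpa using hfg
  | cons i L ih =>
    rw [List.foldr_cons]
    have step := ih hfg
    simp only [Function.comp_apply]
    generalize ((List.foldr (fun i F => (pdx i)^[α i] ∘ F) id L) f) = f' at step ⊢
    generalize ((List.foldr (fun i F => (pdx i)^[α i] ∘ F) id L) g) = g' at step ⊢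
    induction (α i) generalizing f' g' with
    | zero => simpa using step
    | succ m ihm =>
      rw [Function.iterate_succ_apply]
      exact ihm _ _ (pdx_congr hU step i)

lemma dU_congr (hU : IsOpen U) {f g : Phase n → ℂ} (hfg : Set.EqOn f g U) (α : Fin n → ℕ) :
    Set.EqOn (dU α f) (dU α g) U := by
  rw [dU, dU]
  generalize (List.finRange n) = L
  induction L generalizing f g with
  | nil => simpa using hfg
  | cons i L ih =>
    rw [List.foldr_cons]
    have step := ih hfg
    simp only [Function.comp_apply]
    generalize ((List.foldr (fun i F => (pdu i)^[α i] ∘ F) id L) f) = f' at step ⊢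
    generalize ((List.foldr (fun i F => (pdu i)^[α i] ∘ F) id L) g) = g' at step ⊢
    induction (α i) generalizing f' g' with
    | zero => simpa using step
    | succ m ihm =>
      rw [Function.iterate_succ_apply]
      exact ihm _ _ (pdu_congr hU step i)

end ZeroAndCongr

section Sums

variable {n : ℕ}

/-- One term of the Leibniz product. -/
noncomputable def termFn (a b : ℤ → Phase n → ℂ) (j : ℤ) (z : Phase n)
    (ak : (Fin n → ℕ) × ℤ) : ℂ :=
  ((∏ i, (ak.1 i).factorial : ℕ) : ℂ)⁻¹
    * dU ak.1 (a ak.2) z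
    * dX ak.1 (b (j + ((∑ i, ak.1 i : ℕ) : ℤ) - ak.2)) z

/-- The index set capturing the support of the Leibniz sum in degree `j`. -/
noncomputable def idxSet (n : ℕ) (j : ℤ) : Finset ((Fin n → ℕ) × ℤ) :=
  Finset.Iic (fun _ => (-j).toNat) ×ˢ Finset.Icc j 0

lemma leibniz_eq_sum {a b : ℤ → Phase n → ℂ} (ha : ∀ k : ℤ, 0 < k → a k = 0)
    (hb : ∀ k : ℤ, 0 < k → b k = 0) (j : ℤ) (z : Phase n) :
    leibniz a b j z = ∑ ak ∈ idxSet n j, termFn a b j z ak := by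
  rw [leibniz]
  apply finsum_eq_finset_sum_of_support_subset
  intro ak hak
  simp only [Function.mem_support] at hak
  have h1 : dU ak.1 (a ak.2) z ≠ 0 := by
    intro h0; apply hak; rw [h0]; ring
  have h2 : dX ak.1 (b (j + ((∑ i, ak.1 i : ℕ) : ℤ) - ak.2)) z ≠ 0 := by
    intro h0; apply hak; rw [h0]; ring
  have hk : ak.2 ≤ 0 := by
    by_contra hc
    push_neg at hc
    rw [ha ak.2 hc] at h1
    exact h1 (by rw [dU_zero]; rfl)
  have hl : j + ((∑ i, ak.1 i : ℕ) : ℤ) - ak.2 ≤ 0 := by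
    by_contra hc
    push_neg at hc
    rw [hb _ hc] at h2
    exact h2 (by rw [dX_zero]; rfl)
  have hsum : ((∑ i, ak.1 i : ℕ) : ℤ) ≤ -j := by omega
  simp only [idxSet, Finset.coe_product, Set.mem_prod, Finset.mem_coe, Finset.mem_Iic,
    Finset.mem_Icc]
  refine ⟨?_, by omega, hk⟩
  intro i
  have h5 : ak.1 i ≤ ∑ i', ak.1 i' := Finset.single_le_sum (fun _ _ => Nat.zero_le _)
    (Finset.mem_univ i)
  show ak.1 i ≤ (-j).toNat
  omega

/-- Truncation of a symbol: kill all coefficients of degree `≤ j`. -/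
noncomputable def trunc (a : ℤ → Phase n → ℂ) (j : ℤ) : ℤ → Phase n → ℂ :=
  fun k => if k ≤ j then 0 else a k

lemma trunc_vanish {a : ℤ → Phase n → ℂ} (ha : ∀ k : ℤ, 0 < k → a k = 0) {j : ℤ} (hj : j < 0) :
    ∀ k : ℤ, 0 < k → trunc a j k = 0 := by
  intro k hk
  rw [trunc, if_neg (by omega)]
  exact ha k hk

lemma sum_pos_of_ne_zero {α : Fin n → ℕ} (hα : α ≠ 0) : 0 < ∑ i, α i := by
  by_contra hc
  push_neg at hc
  apply hα
  funext i
  have h0 : ∑ i', α i' = 0 := Nat.le_zero.mp hc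
  rw [Finset.sum_eq_zero_iff] at h0
  exact h0 i (Finset.mem_univ i)

lemma termFn_zero1 {a b : ℤ → Phase n → ℂ} {j : ℤ} {z : Phase n} (α : Fin n → ℕ) (k : ℤ)
    (h : a k = 0) : termFn a b j z (α, k) = 0 := by
  rw [termFn, h, dU_zero]
  show _ * (0 : Phase n → ℂ) z * _ = 0
  rw [Pi.zero_apply]; ring

lemma termFn_zero2 {a b : ℤ → Phase n → ℂ} {j : ℤ} {z : Phase n} (α : Fin n → ℕ) (k : ℤ)
    (h : b (j + ((∑ i, α i : ℕ) : ℤ) - k) = 0) : termFn a b j z (α, k) = 0 := by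
  rw [termFn, h, dX_zero]
  show _ * _ * (0 : Phase n → ℂ) z = 0
  rw [Pi.zero_apply]; ring

lemma leibniz_split {a : ℤ → Phase n → ℂ} (ha : ∀ k : ℤ, 0 < k → a k = 0) {j : ℤ}
    (hj : j < 0) (z : Phase n) :
    leibniz a a j z = a 0 z * a j z + a j z * a 0 z
      + leibniz (trunc a j) (trunc a j) j z := by
  have hta := trunc_vanish ha hj
  rw [leibniz_eq_sum ha ha j z, leibniz_eq_sum hta hta j z]
  have key : ∀ ak : (Fin n → ℕ) × ℤ, termFn a a j z ak =
      termFn (trunc a j) (trunc a j) j z ak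
      + (if ak = ((0 : Fin n → ℕ), (0:ℤ)) then a 0 z * a j z else 0)
      + (if ak = ((0 : Fin n → ℕ), j) then a j z * a 0 z else 0) := by
    rintro ⟨α, k⟩
    by_cases hα : α = 0
    · subst hα
      have e1 : termFn a a j z ((0 : Fin n → ℕ), k) = a k z * a (j - k) z := by
        simp [termFn, dU_zero_exp, dX_zero_exp]
      have e2 : termFn (trunc a j) (trunc a j) j z ((0 : Fin n → ℕ), k)
          = trunc a j k z * trunc a j (j - k) z := by
        simp [termFn, dU_zero_exp, dX_zero_exp]
      rw [e1, e2]
      by_cases hk0 : k = 0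
      · subst hk0
        rw [if_pos rfl, if_neg (by simp [Prod.ext_iff]; omega)]
        have t1 : trunc a j (j - 0) z = 0 := by
          rw [trunc, if_pos (by omega)]; rfl
        rw [t1]
        ring
      · by_cases hkj : k = j
        · have t1 : trunc a j j z = 0 := by rw [trunc]; rw [if_pos le_rfl]; rfl
          rw [hkj, sub_self, if_neg (by simp [Prod.ext_iff]; omega), if_pos rfl, t1]
          ring
        · rw [if_neg (by simp [Prod.ext_iff]; omega), if_neg (by simp [Prod.ext_iff]; omega),
            add_zero, add_zero]
          by_cases hk : k ≤ j
          · have hz1 : a (j - k) = 0 := ha _ (by omega)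
            have hz2 : trunc a j (j - k) = 0 := by rw [trunc, if_neg (by omega)]; exact hz1
            rw [hz1, hz2, Pi.zero_apply]
            ring
          · rw [show trunc a j k = a k from by rw [trunc, if_neg hk]]
            by_cases hl : j - k ≤ j
            · have hz1 : a k = 0 := ha _ (by omega)
              rw [hz1, Pi.zero_apply]
              ring
            · rw [show trunc a j (j - k) = a (j - k) from by rw [trunc, if_neg hl]]
    · have hN : 0 < ∑ i, α i := sum_pos_of_ne_zero hα
      rw [if_neg (by simp [Prod.ext_iff]; intro h; exact absurd h hα),
        if_neg (by simp [Prod.ext_iff]; intro h; exact absurd h hα), add_zero, add_zero]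
      by_cases hk : k ≤ j
      · have hl : (0:ℤ) < j + ((∑ i, α i : ℕ) : ℤ) - k := by omega
        rw [termFn_zero2 (a := a) α k (ha _ hl), termFn_zero2 α k (hta _ hl)]
      · by_cases hl2 : j + ((∑ i, α i : ℕ) : ℤ) - k ≤ j
        · have hkpos : (0:ℤ) < k := by omega
          rw [termFn_zero1 (b := a) α k (ha _ hkpos), termFn_zero1 α k (hta _ hkpos)]
        · have t1 : trunc a j k = a k := by rw [trunc, if_neg hk]
          have t2 : trunc a j (j + ((∑ i, α i : ℕ) : ℤ) - k)
              = a (j + ((∑ i, α i : ℕ) : ℤ) - k) := by rw [trunc, if_neg hl2]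
          rw [termFn, termFn, t1, t2]
  rw [Finset.sum_congr rfl (fun ak _ => key ak), Finset.sum_add_distrib,
    Finset.sum_add_distrib, Finset.sum_ite_eq' (idxSet n j) ((0 : Fin n → ℕ), (0:ℤ)),
    Finset.sum_ite_eq' (idxSet n j) ((0 : Fin n → ℕ), j)]
  have m1 : ((0 : Fin n → ℕ), (0:ℤ)) ∈ idxSet n j := by
    simp only [idxSet, Finset.mem_product, Finset.mem_Iic, Finset.mem_Icc]
    exact ⟨fun i => Nat.zero_le _, by omega, le_rfl⟩
  have m2 : ((0 : Fin n → ℕ), j) ∈ idxSet n j := by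
    simp only [idxSet, Finset.mem_product, Finset.mem_Iic, Finset.mem_Icc]
    exact ⟨fun i => Nat.zero_le _, le_rfl, by omega⟩
  rw [if_pos m1, if_pos m2]
  ring

end Sums

noncomputable def Qaux (n : ℕ) (p : ℤ → Phase n → ℂ) (s : Phase n → ℂ) : ℕ → Phase n → ℂ
  | 0 => s
  | m + 1 =>
    fun z =>
      (p (-(m + 1 : ℕ)) z -
        leibniz
          (fun k => if 0 < k then 0 else
            if _h : (-k).toNat < m + 1 then Qaux n p s (-k).toNat else 0)
          (fun k => if 0 < k then 0 else
            if _h : (-k).toNat < m + 1 then Qaux n p s (-k).toNat else 0)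
          (-(m + 1 : ℕ)) z) / (2 * s z)
  termination_by m => m
  decreasing_by all_goals exact _h

/-- a formal WKB symbol `p` of order `0` whose principal symbol `p₀`
admits a nowhere vanishing holomorphic square root `s` on `U` has a unique square
root for the Leibniz product with principal symbol `s` (formal-symbol counterpart
of Lemma 5.3 (ii) of the paper). -/
theorem stmt_13 (n : ℕ) (hn : 1 ≤ n) (U : Set (Phase n)) (hU : IsOpen U)
    (p : ℤ → Phase n → ℂ)
    (hholo : ∀ j : ℤ, DifferentiableOn ℂ (p j) U)
    (hbound : ∀ j : ℤ, 0 < j → p j = 0)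
    (s : Phase n → ℂ)
    (hs : DifferentiableOn ℂ s U)
    (hsnz : ∀ z ∈ U, s z ≠ 0)
    (hssq : ∀ z ∈ U, s z * s z = p 0 z) :
    ∃ q : ℤ → Phase n → ℂ,
      ((∀ j : ℤ, DifferentiableOn ℂ (q j) U) ∧
       (∀ j : ℤ, 0 < j → q j = 0) ∧
       (∀ z ∈ U, q 0 z = s z) ∧
       (∀ j : ℤ, ∀ z ∈ U, leibniz q q j z = p j z)) ∧
      (∀ q' : ℤ → Phase n → ℂ,
        ((∀ j : ℤ, DifferentiableOn ℂ (q' j) U) ∧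
         (∀ j : ℤ, 0 < j → q' j = 0) ∧
         (∀ z ∈ U, q' 0 z = s z) ∧
         (∀ j : ℤ, ∀ z ∈ U, leibniz q' q' j z = p j z)) →
        ∀ j : ℤ, ∀ z ∈ U, q' j z = q j z) := by
  set q : ℤ → Phase n → ℂ := fun j => if 0 < j then 0 else Qaux n p s (-j).toNat with hqdef
  have hq0 : q 0 = s := by
    rw [hqdef]
    norm_num
    rw [Qaux]
  have hqvan : ∀ j : ℤ, 0 < j → q j = 0 := by
    intro j hj
    rw [hqdef]
    exact if_pos hj
  -- the truncated family appearing in the recursion is `trunc q`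
  have htr : ∀ m : ℕ,
      (fun k : ℤ => if 0 < k then (0 : Phase n → ℂ) else
        if _h : (-k).toNat < m + 1 then Qaux n p s (-k).toNat else 0)
        = trunc q (-(m + 1 : ℕ)) := by
    intro m
    funext k
    rw [trunc]
    by_cases h0 : 0 < k
    · rw [if_pos h0, if_neg (by push_cast; omega)]
      simp only [hqdef]
      rw [if_pos h0]
    · rw [if_neg h0]
      by_cases h1 : (-k).toNat < m + 1
      · rw [dif_pos h1, if_neg (by push_cast; omega)]
        simp only [hqdef]
        rw [if_neg h0]
      · rw [dif_neg h1, if_pos (by push_cast; omega)]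
  -- the defining equation of `q` in negative degrees
  have hqeq : ∀ m : ℕ, q (-(m + 1 : ℕ)) = fun z =>
      (p (-(m + 1 : ℕ)) z -
        leibniz (trunc q (-(m + 1 : ℕ))) (trunc q (-(m + 1 : ℕ))) (-(m + 1 : ℕ)) z)
        / (2 * s z) := by
    intro m
    have e0 : q (-(m + 1 : ℕ)) = Qaux n p s (m + 1) := by
      simp only [hqdef]
      have e1 : ¬ (0 : ℤ) < -(m + 1 : ℕ) := by push_cast; omega
      rw [if_neg e1]
      congr 1
    rw [e0, Qaux, htr m]
  -- differentiability of the recursion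
  have hQdiff : ∀ m : ℕ, DifferentiableOn ℂ (Qaux n p s m) U := by
    intro m
    induction m using Nat.strong_induction_on with
    | _ m ih =>
      match m with
      | 0 => rw [Qaux]; exact hs
      | m + 1 =>
        rw [Qaux]
        set q' : ℤ → Phase n → ℂ := fun k => if 0 < k then 0 else
          if _h : (-k).toNat < m + 1 then Qaux n p s (-k).toNat else 0 with hq'
        have hv : ∀ k : ℤ, 0 < k → q' k = 0 := by
          intro k hk
          simp only [hq']
          rw [if_pos hk]
        have hq'd : ∀ k : ℤ, DifferentiableOn ℂ (q' k) U := by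
          intro k
          simp only [hq']
          by_cases h0 : 0 < k
          · rw [if_pos h0]; exact differentiableOn_const 0
          · rw [if_neg h0]
            by_cases h1 : (-k).toNat < m + 1
            · rw [dif_pos h1]; exact ih _ h1
            · rw [dif_neg h1]; exact differentiableOn_const 0
        have hrw : (fun z => (p (-(m + 1 : ℕ)) z
              - leibniz q' q' (-(m + 1 : ℕ)) z) / (2 * s z))
            = fun z => (p (-(m + 1 : ℕ)) z
              - ∑ ak ∈ idxSet n (-(m + 1 : ℕ)), termFn q' q' (-(m + 1 : ℕ)) z ak)
              * (2 * s z)⁻¹ := by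
          funext z
          rw [leibniz_eq_sum hv hv, div_eq_mul_inv]
        rw [hrw]
        apply DifferentiableOn.mul
        · apply DifferentiableOn.sub (hholo _)
          apply DifferentiableOn.fun_sum
          intro ak _
          exact ((differentiableOn_const _).mul (dU_diffOn hU (hq'd _) _)).mul
            (dX_diffOn hU (hq'd _) _)
        · exact DifferentiableOn.inv ((differentiableOn_const 2).mul hs)
            (fun z hz => mul_ne_zero two_ne_zero (hsnz z hz))
  have hqdiff : ∀ j : ℤ, DifferentiableOn ℂ (q j) U := by
    intro j
    simp only [hqdef]
    by_cases h0 : 0 < j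
    · rw [if_pos h0]; exact differentiableOn_const 0
    · rw [if_neg h0]; exact hQdiff _
  -- the Leibniz square of `q` is `p` on `U`
  have hqmul : ∀ j : ℤ, ∀ z ∈ U, leibniz q q j z = p j z := by
    intro j z hz
    rcases lt_trichotomy j 0 with hneg | rfl | hpos
    · obtain ⟨m, rfl⟩ : ∃ m : ℕ, j = -(m + 1 : ℕ) := ⟨(-j).toNat - 1, by omega⟩
      rw [leibniz_split hqvan (by push_cast; omega) z]
      have hfix := congrFun (hqeq m) z
      have hsz := hsnz z hz
      rw [congrFun hq0 z, hfix]
      field_simp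
      ring
    · rw [leibniz_eq_sum hqvan hqvan]
      have hsingle : ∀ ak ∈ idxSet n 0, ak ≠ ((0 : Fin n → ℕ), (0:ℤ)) →
          termFn q q 0 z ak = 0 := by
        rintro ⟨α, k⟩ hak hne
        exfalso
        apply hne
        simp only [idxSet, Finset.mem_product, Finset.mem_Iic, Finset.mem_Icc] at hak
        obtain ⟨h1, h2, h3⟩ := hak
        have hα : α = 0 := by
          funext i
          have := h1 i
          simpa using this
        have hk : k = 0 := le_antisymm h3 h2
        rw [hα, hk]
      have m1 : ((0 : Fin n → ℕ), (0:ℤ)) ∈ idxSet n 0 := by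
        simp only [idxSet, Finset.mem_product, Finset.mem_Iic, Finset.mem_Icc]
        exact ⟨fun i => le_rfl, le_rfl, le_rfl⟩
      rw [Finset.sum_eq_single_of_mem _ m1 hsingle]
      have e1 : termFn q q 0 z ((0 : Fin n → ℕ), (0:ℤ)) = q 0 z * q 0 z := by
        simp [termFn, dU_zero_exp, dX_zero_exp]
      rw [e1, congrFun hq0 z]
      exact hssq z hz
    · rw [leibniz_eq_sum hqvan hqvan]
      have : idxSet n j = ∅ := by
        rw [idxSet, Finset.Icc_eq_empty (by omega), Finset.product_empty]
      rw [this, Finset.sum_empty, hbound j hpos]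
      rfl
  -- uniqueness
  have huniq : ∀ q2 : ℤ → Phase n → ℂ,
      ((∀ j : ℤ, DifferentiableOn ℂ (q2 j) U) ∧
       (∀ j : ℤ, 0 < j → q2 j = 0) ∧
       (∀ z ∈ U, q2 0 z = s z) ∧
       (∀ j : ℤ, ∀ z ∈ U, leibniz q2 q2 j z = p j z)) →
      ∀ j : ℤ, ∀ z ∈ U, q2 j z = q j z := by
    rintro q2 ⟨_, hvan2, h02, hmul2⟩
    have claim : ∀ m : ℕ, ∀ z ∈ U, q2 (-(m : ℕ) : ℤ) z = q (-(m : ℕ) : ℤ) z := by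
      intro m
      induction m using Nat.strong_induction_on with
      | _ m ih =>
        rcases m with _ | m
        · intro z hz
          simp only [Nat.cast_zero, neg_zero]
          rw [h02 z hz, congrFun hq0 z]
        · intro z hz
          have hjneg : (-(m + 1 : ℕ) : ℤ) < 0 := by push_cast; omega
          have htreq : ∀ k : ℤ,
              Set.EqOn (trunc q2 (-(m + 1 : ℕ)) k) (trunc q (-(m + 1 : ℕ)) k) U := by
            intro k w hw
            rw [trunc, trunc]
            by_cases hk : k ≤ -(m + 1 : ℕ)
            · rw [if_pos hk, if_pos hk]
            · rw [if_neg hk, if_neg hk]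
              by_cases h0 : 0 < k
              · rw [hvan2 k h0, hqvan k h0]
              · have hk2 : k = -(((-k).toNat : ℕ) : ℤ) := by omega
                have hlt : (-k).toNat < m + 1 := by push_cast at hk; omega
                rw [hk2]
                exact ih _ hlt w hw
          have hv2 := trunc_vanish hvan2 hjneg
          have hv1 := trunc_vanish hqvan hjneg
          have hLeq : leibniz (trunc q2 (-(m + 1 : ℕ))) (trunc q2 (-(m + 1 : ℕ)))
                (-(m + 1 : ℕ)) z
              = leibniz (trunc q (-(m + 1 : ℕ))) (trunc q (-(m + 1 : ℕ)))
                (-(m + 1 : ℕ)) z := by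
            rw [leibniz_eq_sum hv2 hv2, leibniz_eq_sum hv1 hv1]
            apply Finset.sum_congr rfl
            rintro ⟨α, k⟩ _
            rw [termFn, termFn, dU_congr hU (htreq _) α hz, dX_congr hU (htreq _) α hz]
          have e1 : p (-(m + 1 : ℕ)) z
              = s z * q2 (-(m + 1 : ℕ)) z + q2 (-(m + 1 : ℕ)) z * s z
              + leibniz (trunc q (-(m + 1 : ℕ))) (trunc q (-(m + 1 : ℕ)))
                  (-(m + 1 : ℕ)) z := by
            rw [← hmul2 _ z hz, leibniz_split hvan2 hjneg z, h02 z hz, hLeq]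
          have e2 : p (-(m + 1 : ℕ)) z
              = s z * q (-(m + 1 : ℕ)) z + q (-(m + 1 : ℕ)) z * s z
              + leibniz (trunc q (-(m + 1 : ℕ))) (trunc q (-(m + 1 : ℕ)))
                  (-(m + 1 : ℕ)) z := by
            rw [← hqmul _ z hz, leibniz_split hqvan hjneg z, congrFun hq0 z]
          have h2 : (2 : ℂ) * s z ≠ 0 := mul_ne_zero two_ne_zero (hsnz z hz)
          apply mul_left_cancel₀ h2
          linear_combination e2 - e1
    intro j z hz
    by_cases h0 : 0 < j
    · rw [hvan2 j h0, hqvan j h0]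
    · have hj : j = -(((-j).toNat : ℕ) : ℤ) := by omega
      rw [hj]
      exact claim _ z hz
  exact ⟨q, ⟨hqdiff, hqvan, fun z _ => congrFun hq0 z, hqmul⟩, huniq⟩
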